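/- Let P ∈ ℝ[x,y] be a polynomial of degree k ≥ 1 in two variables, and let P = P_0 + P_1 + … + P_k be its decomposition into homogeneous components, P_j homogeneous of degree j. If the function θ ↦ P(cos θ, sin θ) is constant on ℝ, then P_k(1, i) = 0, where P_k is evaluated over ℂ via the inclusion ℝ ⊆ ℂ and i denotes the imaginary unit. -/
import Mathlib

open MvPolynomial Complex

lemma eval_mul_of_isHomogeneous {σ : Type*} [Fintype σ] {φ : MvPolynomial σ ℂ} {n : ℕ}
    (h : φ.IsHomogeneous n) (c : ℂ) (x : σ → ℂ) :
    MvPolynomial.eval (fun i => c * x i) φ = c ^ n * MvPolynomial.eval x φ := by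
  rw [MvPolynomial.eval_eq', MvPolynomial.eval_eq', Finset.mul_sum]
  apply Finset.sum_congr rfl
  intro d hd
  rw [MvPolynomial.mem_support_iff] at hd
  have hdeg : ∑ i, d i = n := by
    have := h hd
    simpa [Finsupp.weight_apply, Finsupp.sum_fintype] using this
  simp_rw [mul_pow]
  rw [Finset.prod_mul_distrib, Finset.prod_pow_eq_pow_sum, hdeg]
  ring

lemma polyeval_aeval {σ : Type*} (p : MvPolynomial σ ℂ) (g : σ → Polynomial ℂ) (z : ℂ) :
    Polynomial.eval z (MvPolynomial.aeval g p) =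
      MvPolynomial.eval (fun i => Polynomial.eval z (g i)) p := by
  rw [MvPolynomial.aeval_def, show Polynomial.eval z (eval₂ (algebraMap ℂ (Polynomial ℂ)) g p) = (Polynomial.evalRingHom z) (eval₂ (algebraMap ℂ (Polynomial ℂ)) g p) from rfl,
    MvPolynomial.eval₂_comp_left (Polynomial.evalRingHom z)]
  have : (Polynomial.evalRingHom z).comp (algebraMap ℂ (Polynomial ℂ)) = RingHom.id ℂ := by
    ext w; simp
  rw [this]
  rfl


/-- If `P ∈ ℝ[x,y]` has degree `k ≥ 1` and `θ ↦ P(cos θ, sin θ)` is constant on `ℝ`,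
then the degree-`k` homogeneous component `P_k` of `P` satisfies `P_k(1, i) = 0` in `ℂ`. -/
theorem stmt_0 (P : MvPolynomial (Fin 2) ℝ) (k : ℕ) (hk : 1 ≤ k)
    (hdeg : P.totalDegree = k)
    (hconst : ∀ θ₁ θ₂ : ℝ,
      MvPolynomial.eval ![Real.cos θ₁, Real.sin θ₁] P =
      MvPolynomial.eval ![Real.cos θ₂, Real.sin θ₂] P) :
    MvPolynomial.eval ![(1 : ℂ), Complex.I]
      (MvPolynomial.map (algebraMap ℝ ℂ) (MvPolynomial.homogeneousComponent k P)) = 0 := by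
  classical
  set f := algebraMap ℝ ℂ with hf
  set H : ℕ → MvPolynomial (Fin 2) ℂ :=
    fun j => MvPolynomial.map f (MvPolynomial.homogeneousComponent j P) with hH
  have hHhom : ∀ j, (H j).IsHomogeneous j := fun j =>
    (MvPolynomial.homogeneousComponent_isHomogeneous j P).map f
  have hsum : ∑ j ∈ Finset.range (k + 1), H j = MvPolynomial.map f P := by
    rw [hH, ← map_sum]
    congr 1
    rw [← hdeg]
    exact MvPolynomial.sum_homogeneousComponent P
  set A : Polynomial ℂ := (Polynomial.X ^ 2 + 1) * Polynomial.C (1 / 2) with hA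
  set B : Polynomial ℂ := (Polynomial.X ^ 2 - 1) * Polynomial.C (-(I / 2)) with hB
  set Q : Polynomial ℂ :=
    ∑ j ∈ Finset.range (k + 1), Polynomial.X ^ (k - j) * MvPolynomial.aeval ![A, B] (H j)
    with hQ
  set c : ℝ := MvPolynomial.eval ![Real.cos 0, Real.sin 0] P with hc
  have hmapeval : ∀ θ : ℝ,
      MvPolynomial.eval (fun i => (![Real.cos θ, Real.sin θ] i : ℂ)) (MvPolynomial.map f P)
        = (c : ℂ) := by
    intro θ
    have h2 := MvPolynomial.eval₂_comp_left f (RingHom.id ℝ) ![Real.cos θ, Real.sin θ] P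
    rw [RingHom.comp_id] at h2
    rw [MvPolynomial.eval_map,
      show (fun i => (![Real.cos θ, Real.sin θ] i : ℂ)) = ⇑f ∘ ![Real.cos θ, Real.sin θ]
        from rfl, ← h2,
      show MvPolynomial.eval₂ (RingHom.id ℝ) ![Real.cos θ, Real.sin θ] P
        = MvPolynomial.eval ![Real.cos θ, Real.sin θ] P from rfl, hconst θ 0]
    rfl
  -- key evaluation on the unit circle
  have hcirc : ∀ θ : ℝ, Polynomial.eval (Complex.exp (θ * I)) Q
      = (c : ℂ) * Complex.exp (θ * I) ^ k := by
    intro θ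
    set x : Fin 2 → ℂ := fun i => (![Real.cos θ, Real.sin θ] i : ℂ) with hx
    set z : ℂ := Complex.exp (θ * I) with hzdef
    have hz : z = (Real.cos θ : ℂ) + (Real.sin θ : ℂ) * I := by
      rw [hzdef, Complex.exp_mul_I, Complex.ofReal_cos, Complex.ofReal_sin]
    have hpyth : (Real.cos θ : ℂ) ^ 2 + (Real.sin θ : ℂ) ^ 2 = 1 := by
      have h := Real.cos_sq_add_sin_sq θ
      exact_mod_cast congrArg (Complex.ofReal) h
    have hAe : Polynomial.eval z A = z * (Real.cos θ : ℂ) := by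
      rw [hA]
      simp only [Polynomial.eval_mul, Polynomial.eval_add, Polynomial.eval_pow,
        Polynomial.eval_X, Polynomial.eval_one, Polynomial.eval_C, hz]
      linear_combination ((Real.sin θ : ℂ) ^ 2 / 2) * Complex.I_sq - (1 / 2) * hpyth
    have hBe : Polynomial.eval z B = z * (Real.sin θ : ℂ) := by
      rw [hB]
      simp only [Polynomial.eval_mul, Polynomial.eval_sub, Polynomial.eval_pow,
        Polynomial.eval_X, Polynomial.eval_one, Polynomial.eval_C, hz]
      linear_combination (-((Real.sin θ : ℂ) ^ 2 * I / 2)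
        - (Real.cos θ : ℂ) * (Real.sin θ : ℂ)) * Complex.I_sq - (I / 2) * hpyth
    have hg : (fun i => Polynomial.eval z (![A, B] i)) = fun i => z * x i := by
      funext i
      fin_cases i
      · exact hAe
      · exact hBe
    have hQe : Polynomial.eval z Q = ∑ j ∈ Finset.range (k + 1),
        z ^ (k - j) * MvPolynomial.eval (fun i => Polynomial.eval z (![A, B] i)) (H j) := by
      rw [hQ, Polynomial.eval_finset_sum]
      exact Finset.sum_congr rfl fun j _ => by
        rw [Polynomial.eval_mul, Polynomial.eval_pow, Polynomial.eval_X, polyeval_aeval]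
    rw [hQe]
    calc ∑ j ∈ Finset.range (k + 1),
          z ^ (k - j) * MvPolynomial.eval (fun i => Polynomial.eval z (![A, B] i)) (H j)
        = ∑ j ∈ Finset.range (k + 1), z ^ k * MvPolynomial.eval x (H j) := by
          apply Finset.sum_congr rfl
          intro j hj
          rw [hg, eval_mul_of_isHomogeneous (hHhom j) z x, ← mul_assoc, ← pow_add,
            Nat.sub_add_cancel (Nat.lt_succ_iff.mp (Finset.mem_range.mp hj))]
      _ = z ^ k * MvPolynomial.eval x (∑ j ∈ Finset.range (k + 1), H j) := by
          rw [map_sum, Finset.mul_sum]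
      _ = (c : ℂ) * z ^ k := by rw [hsum, hx, hmapeval θ]; ring
  -- Q is c * X^k as a polynomial
  have hQeq : Q = Polynomial.C (c : ℂ) * Polynomial.X ^ k := by
    apply Polynomial.eq_of_infinite_eval_eq
    have hinj : Set.InjOn (fun θ : ℝ => Complex.exp (θ * I)) (Set.Ioo 0 1) := by
      intro a ha b hb hab
      rw [Complex.exp_eq_exp_iff_exists_int] at hab
      obtain ⟨n, hn⟩ := hab
      have h3 : ((a - b - n * (2 * Real.pi) : ℝ) : ℂ) * I = 0 := by
        push_cast
        linear_combination hn
      have h4 : a - b - n * (2 * Real.pi) = 0 := by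
        rcases mul_eq_zero.mp h3 with h | h
        · exact_mod_cast h
        · exact absurd h Complex.I_ne_zero
      have hn0 : n = 0 := by
        by_contra hne
        rcases lt_or_gt_of_ne hne with h | h
        · have hle : (n : ℝ) ≤ -1 := by
            have : n ≤ -1 := by omega
            exact_mod_cast this
          nlinarith [Real.pi_gt_three, ha.1, ha.2, hb.1, hb.2]
        · have hle : (1 : ℝ) ≤ (n : ℝ) := by exact_mod_cast h
          nlinarith [Real.pi_gt_three, ha.1, ha.2, hb.1, hb.2]
      rw [hn0] at h4
      push_cast at h4
      linarith
    have hinf : Set.Infinite ((fun θ : ℝ => Complex.exp (θ * I)) '' Set.Ioo 0 1) :=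
      Set.Infinite.image hinj (Set.Ioo_infinite (by norm_num))
    apply hinf.mono
    rintro _ ⟨θ, -, rfl⟩
    simp only [Set.mem_setOf_eq, hcirc θ, Polynomial.eval_mul, Polynomial.eval_C,
      Polynomial.eval_pow, Polynomial.eval_X]
  -- evaluate at 0
  have h0 : Polynomial.eval 0 Q = 0 := by
    rw [hQeq]
    simp [zero_pow (show k ≠ 0 by omega)]
  have hQ0 : Polynomial.eval 0 Q
      = (1 / 2 : ℂ) ^ k * MvPolynomial.eval ![(1 : ℂ), I] (H k) := by
    rw [hQ, Polynomial.eval_finset_sum, Finset.sum_eq_single k]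
    · rw [Polynomial.eval_mul, Polynomial.eval_pow, Polynomial.eval_X, Nat.sub_self,
        pow_zero, one_mul, polyeval_aeval]
      have hg0 : (fun i => Polynomial.eval 0 (![A, B] i))
          = fun i => (1 / 2 : ℂ) * (![(1 : ℂ), I] i) := by
        funext i
        fin_cases i
        · simp [hA]
        · simp [hB]
          ring
      rw [hg0, eval_mul_of_isHomogeneous (hHhom k)]
    · intro j hj hjk
      rw [Polynomial.eval_mul, Polynomial.eval_pow, Polynomial.eval_X,
        zero_pow (show k - j ≠ 0 by
          have := Finset.mem_range.mp hj; omega), zero_mul]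
    · intro h
      exact absurd (Finset.self_mem_range_succ k) h
  have hfin : (1 / 2 : ℂ) ^ k * MvPolynomial.eval ![(1 : ℂ), I] (H k) = 0 := by
    rw [← hQ0, h0]
  have h2 : ((1 / 2 : ℂ)) ^ k ≠ 0 := pow_ne_zero _ (by norm_num)
  exact (mul_eq_zero.mp hfin).resolve_left h2
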